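/- arXiv:1205.5680 — 3 statements merged into one kernel-verified Lean document; each statement's English description precedes it below -/
import Mathlib

section
/- Let a, b be nonzero real numbers. Then the quaternion algebra (a,b/ℝ) is either isomorphic as an ℝ-algebra to the matrix algebra M₂(ℝ), or it is a division ring. -/
open Quaternion QuaternionAlgebra

/-- If `a` is a nonzero square and `b ≠ 0`, the quaternion algebra `(a,b/ℝ)` splits. -/
lemma split_of_sq (a b s : ℝ) (hb : b ≠ 0) (hs : s ≠ 0) (h : s * s = a) :
    Nonempty (ℍ[ℝ, a, b] ≃ₐ[ℝ] Matrix (Fin 2) (Fin 2) ℝ) := by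
  let B : QuaternionAlgebra.Basis (Matrix (Fin 2) (Fin 2) ℝ) a 0 b :=
    { i := !![s, 0; 0, -s]
      j := !![0, 1; b, 0]
      k := !![0, s; -(s*b), 0]
      i_mul_i := by ext i j; fin_cases i <;> fin_cases j <;>
        simp [Matrix.mul_apply, Fin.sum_univ_two, Matrix.one_apply, ← h]
      j_mul_j := by ext i j; fin_cases i <;> fin_cases j <;>
        simp [Matrix.mul_apply, Fin.sum_univ_two, Matrix.one_apply]
      i_mul_j := by ext i j; fin_cases i <;> fin_cases j <;>
        simp [Matrix.mul_apply, Fin.sum_univ_two]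
      j_mul_i := by ext i j; fin_cases i <;> fin_cases j <;>
        simp [Matrix.mul_apply, Fin.sum_univ_two] <;> ring }
  let φ := B.liftHom
  have hinj : Function.Injective φ := by
    rw [injective_iff_map_eq_zero]
    intro x hx
    have h00 := congrFun (congrFun hx 0) 0
    have h11 := congrFun (congrFun hx 1) 1
    have h01 := congrFun (congrFun hx 0) 1
    have h10 := congrFun (congrFun hx 1) 0
    simp [φ, QuaternionAlgebra.Basis.liftHom_apply, QuaternionAlgebra.Basis.lift, B,
      Matrix.algebraMap_eq_diagonal] at h00 h11 h01 h10
    have hre : x.re = 0 := by linarith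
    have hi : x.imI = 0 := by
      have h2 : x.imI * s = 0 := by linarith
      rcases mul_eq_zero.mp h2 with h3 | h3
      · exact h3
      · exact absurd h3 hs
    have hk : x.imK = 0 := by
      have h01b : (x.imJ + x.imK * s) * b = 0 := by rw [h01]; ring
      have h2 : x.imK * (s * b) = 0 := by nlinarith [h01b]
      rcases mul_eq_zero.mp h2 with h3 | h3
      · exact h3
      · exact absurd h3 (mul_ne_zero hs hb)
    have hj : x.imJ = 0 := by simpa [hk] using h01
    ext <;> simp [hre, hi, hj, hk]
  have hsurj : Function.Surjective φ :=
    (LinearMap.injective_iff_surjective_of_finrank_eq_finrank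
      (V := ℍ[ℝ,a,b]) (V₂ := Matrix (Fin 2) (Fin 2) ℝ) (K := ℝ)
      (f := φ.toLinearMap)
      (by simp [QuaternionAlgebra.finrank_eq_four, Module.finrank_matrix])).mp hinj
  exact ⟨AlgEquiv.ofBijective φ ⟨hinj, hsurj⟩⟩

/-- The quaternion algebras `(a,b/ℝ)` and `(b,a/ℝ)` are isomorphic. -/
lemma swap_nonempty (a b : ℝ) : Nonempty (ℍ[ℝ, a, b] ≃ₐ[ℝ] ℍ[ℝ, b, a]) := by
  let B1 : QuaternionAlgebra.Basis ℍ[ℝ, b, a] a 0 b :=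
    { i := ⟨0, 0, 1, 0⟩
      j := ⟨0, 1, 0, 0⟩
      k := ⟨0, 0, 0, -1⟩
      i_mul_i := by ext <;> simp
      j_mul_j := by ext <;> simp
      i_mul_j := by ext <;> simp
      j_mul_i := by ext <;> simp }
  let B2 : QuaternionAlgebra.Basis ℍ[ℝ, a, b] b 0 a :=
    { i := ⟨0, 0, 1, 0⟩
      j := ⟨0, 1, 0, 0⟩
      k := ⟨0, 0, 0, -1⟩
      i_mul_i := by ext <;> simp
      j_mul_j := by ext <;> simp
      i_mul_j := by ext <;> simp
      j_mul_i := by ext <;> simp }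
  refine ⟨AlgEquiv.ofAlgHom B1.liftHom B2.liftHom ?_ ?_⟩ <;>
    ext <;> simp [QuaternionAlgebra.Basis.lift, B1, B2]

/-- If `a < 0` and `b < 0`, every nonzero element of `(a,b/ℝ)` is a unit. -/
lemma isUnit_of_neg_neg (a b : ℝ) (ha' : a < 0) (hb' : b < 0) (x : ℍ[ℝ, a, b]) (hx : x ≠ 0) :
    IsUnit x := by
  set n : ℝ := x.re^2 - a*x.imI^2 - b*x.imJ^2 + a*b*x.imK^2 with hn_def
  have hcomp : x.re ≠ 0 ∨ x.imI ≠ 0 ∨ x.imJ ≠ 0 ∨ x.imK ≠ 0 := by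
    by_contra hc
    push_neg at hc
    obtain ⟨h1, h2, h3, h4⟩ := hc
    exact hx (by ext <;> simp [h1, h2, h3, h4])
  have hn : 0 < n := by
    rcases hcomp with h | h | h | h <;>
      nlinarith [mul_self_pos.mpr h, sq_nonneg x.re, sq_nonneg x.imI, sq_nonneg x.imJ,
        sq_nonneg x.imK, mul_pos (neg_pos.mpr ha') (neg_pos.mpr hb')]
  have hn0 : n ≠ 0 := ne_of_gt hn
  have h1 : x * (n⁻¹ • star x) = 1 := by
    ext <;> simp [QuaternionAlgebra.re_mul, QuaternionAlgebra.imI_mul,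
      QuaternionAlgebra.imJ_mul, QuaternionAlgebra.imK_mul] <;>
      first
        | exact Or.inr (by ring)
        | (field_simp; ring)
  have h2 : (n⁻¹ • star x) * x = 1 := by
    ext <;> simp [QuaternionAlgebra.re_mul, QuaternionAlgebra.imI_mul,
      QuaternionAlgebra.imJ_mul, QuaternionAlgebra.imK_mul] <;>
      first
        | exact Or.inr (by ring)
        | (field_simp; ring)
  exact ⟨⟨x, n⁻¹ • star x, h1, h2⟩, rfl⟩

/-- A quaternion algebra `(a,b/ℝ)` with `a, b ≠ 0` is either isomorphic as an
`ℝ`-algebra to the `2×2` real matrix algebra, or it is a division ring (every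
nonzero element is a unit). -/
theorem real_quaternionAlgebra_matrix_or_divisionRing (a b : ℝ) (ha : a ≠ 0) (hb : b ≠ 0) :
    Nonempty (ℍ[ℝ, a, b] ≃ₐ[ℝ] Matrix (Fin 2) (Fin 2) ℝ) ∨
      (∀ x : ℍ[ℝ, a, b], x ≠ 0 → IsUnit x) := by
  rcases lt_or_gt_of_ne ha with ha' | ha'
  · rcases lt_or_gt_of_ne hb with hb' | hb'
    · exact Or.inr (isUnit_of_neg_neg a b ha' hb')
    · left
      obtain ⟨e⟩ := split_of_sq b a (Real.sqrt b) ha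
        (Real.sqrt_ne_zero'.mpr hb') (Real.mul_self_sqrt hb'.le)
      obtain ⟨f⟩ := swap_nonempty a b
      exact ⟨f.trans e⟩
  · exact Or.inl (split_of_sq a b (Real.sqrt a) hb
      (Real.sqrt_ne_zero'.mpr ha') (Real.mul_self_sqrt ha'.le))
end

section
/- Let U ⊆ ℂ be a nonempty connected open set, let ω : U → ℂ be analytic with ω′ nonvanishing on U, and suppose s : U → ℂ is an analytic function with s(x)² = ω′(x) for all x ∈ U. Define y₀ = 1/s and y₁ = ω/s. Then y₀ and y₁ are analytic on U, are linearly independent over ℂ, satisfy the differential equation y″(x) + (1/2)·S(ω)(x)·y(x) = 0 on U, and ω(x) = y₁(x)/y₀(x) for all x ∈ U. -/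
/-- The Schwarzian derivative `S(f) = f‴/f′ − (3/2)(f″/f′)²`. -/
noncomputable def schwarzian (f : ℂ → ℂ) (z : ℂ) : ℂ :=
  deriv (deriv (deriv f)) z / deriv f z - (3 / 2) * (deriv (deriv f) z / deriv f z) ^ 2

private lemma developing_aux₁ (a b c : ℂ) (ha : a ≠ 0) :
    (-c * a ^ 2 - -b * ((2 : ℕ) * a ^ (2 - 1) * b)) / (a ^ 2) ^ 2 +
      1 / 2 * (2 * (b * b + a * c) / a ^ 2 - 3 / 2 * (2 * (a * b) / a ^ 2) ^ 2) * (1 / a)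
      = 0 := by
  have key : a⁻¹ ^ 7 * a ^ 7 = 1 := by
    rw [inv_pow, inv_mul_cancel₀ (pow_ne_zero 7 ha)]
  field_simp [ha]
  ring

private lemma developing_aux₂ (a b c w : ℂ) (ha : a ≠ 0) :
    (((2 : ℕ) * a ^ (2 - 1) * b * a + a ^ 2 * b - (a ^ 2 * b + w * c)) * a ^ 2
        - (a ^ 2 * a - w * b) * ((2 : ℕ) * a ^ (2 - 1) * b)) / (a ^ 2) ^ 2 +
      1 / 2 * (2 * (b * b + a * c) / a ^ 2 - 3 / 2 * (2 * (a * b) / a ^ 2) ^ 2) * (w / a)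
      = 0 := by
  have key : a⁻¹ ^ 7 * a ^ 7 = 1 := by
    rw [inv_pow, inv_mul_cancel₀ (pow_ne_zero 7 ha)]
  field_simp [ha]
  ring

/-- A multivalued map `ω` with nonvanishing derivative is the quotient of two
linearly independent solutions of the uniformizing equation `y″ + (1/2)S(ω)y = 0`:
one may take `y₀ = 1/s` and `y₁ = ω/s` where `s² = ω′`. -/
theorem developing_map_solutions (U : Set ℂ) (hU : IsOpen U) (hUne : U.Nonempty)
    (hUc : IsConnected U) (ω s : ℂ → ℂ)
    (hω : AnalyticOnNhd ℂ ω U) (hω' : ∀ x ∈ U, deriv ω x ≠ 0)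
    (hs : AnalyticOnNhd ℂ s U) (hsq : ∀ x ∈ U, s x ^ 2 = deriv ω x) :
    AnalyticOnNhd ℂ (fun x => 1 / s x) U ∧
      AnalyticOnNhd ℂ (fun x => ω x / s x) U ∧
      (∀ c₀ c₁ : ℂ, (∀ x ∈ U, c₀ * (1 / s x) + c₁ * (ω x / s x) = 0) →
        c₀ = 0 ∧ c₁ = 0) ∧
      (∀ x ∈ U,
        deriv (deriv fun y => 1 / s y) x + 1 / 2 * schwarzian ω x * (1 / s x) = 0) ∧
      (∀ x ∈ U,
        deriv (deriv fun y => ω y / s y) x + 1 / 2 * schwarzian ω x * (ω x / s x) = 0) ∧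
      (∀ x ∈ U, ω x = (ω x / s x) / (1 / s x)) := by
  -- s is nonvanishing on U
  have hsne : ∀ x ∈ U, s x ≠ 0 := by
    intro x hx h
    apply hω' x hx
    rw [← hsq x hx, h]
    ring
  have hs' : AnalyticOnNhd ℂ (deriv s) U := hs.deriv
  -- first derivative of 1/s
  have hy0' : ∀ y ∈ U, HasDerivAt (fun z => 1 / s z) (-deriv s y / s y ^ 2) y := by
    intro y hy
    have h := (hasDerivAt_const y (1 : ℂ)).div ((hs y hy).differentiableAt.hasDerivAt)
      (hsne y hy)
    rw [show -deriv s y / s y ^ 2 = (0 * s y - 1 * deriv s y) / s y ^ 2 by ring]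
    exact h
  -- first derivative of ω/s, with ω′ = s²
  have hy1' : ∀ y ∈ U, HasDerivAt (fun z => ω z / s z)
      ((s y ^ 2 * s y - ω y * deriv s y) / s y ^ 2) y := by
    intro y hy
    have h := ((hω y hy).differentiableAt.hasDerivAt).div
      ((hs y hy).differentiableAt.hasDerivAt) (hsne y hy)
    rwa [← hsq y hy] at h
  -- second derivative of ω on U
  have hω2 : ∀ y ∈ U, deriv (deriv ω) y = 2 * (s y * deriv s y) := by
    intro y hy
    have hE : deriv ω =ᶠ[nhds y] fun z => s z ^ 2 := by
      filter_upwards [hU.mem_nhds hy] with z hz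
      exact (hsq z hz).symm
    have h : HasDerivAt (fun z => s z ^ 2) ((2 : ℕ) * s y ^ (2 - 1) * deriv s y) y :=
      ((hs y hy).differentiableAt.hasDerivAt).pow 2
    rw [hE.deriv_eq, h.deriv]
    push_cast
    ring
  -- analyticity of the two solutions
  have hA0 : AnalyticOnNhd ℂ (fun x => 1 / s x) U :=
    (analyticOnNhd_const (v := (1 : ℂ))).div hs hsne
  have hA1 : AnalyticOnNhd ℂ (fun x => ω x / s x) U := hω.div hs hsne
  refine ⟨hA0, hA1, ?_, ?_, ?_, ?_⟩
  · -- linear independence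
    intro c₀ c₁ h
    obtain ⟨x₀, hx₀⟩ := hUne
    have hz : ∀ x ∈ U, c₀ + c₁ * ω x = 0 := by
      intro x hx
      have h2 : (c₀ * (1 / s x) + c₁ * (ω x / s x)) * s x = c₀ + c₁ * ω x := by
        field_simp [hsne x hx]
      rw [← h2, h x hx, zero_mul]
    have hc₁ : c₁ = 0 := by
      have hE : (fun y => c₀ + c₁ * ω y) =ᶠ[nhds x₀] fun _ => (0 : ℂ) := by
        filter_upwards [hU.mem_nhds hx₀] with y hy using hz y hy
      have hd : deriv (fun y => c₀ + c₁ * ω y) x₀ = 0 := by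
        rw [hE.deriv_eq, deriv_const]
      rw [deriv_const_add, deriv_const_mul _ (hω x₀ hx₀).differentiableAt] at hd
      exact (mul_eq_zero.mp hd).resolve_right (hω' x₀ hx₀)
    have hc₀ : c₀ = 0 := by
      have h0 := hz x₀ hx₀
      rw [hc₁] at h0
      simpa using h0
    exact ⟨hc₀, hc₁⟩
  · -- ODE for y₀ = 1/s
    intro x hx
    have hsx := (hs x hx).differentiableAt.hasDerivAt
    have hs'x := (hs' x hx).differentiableAt.hasDerivAt
    have hne := hsne x hx
    have hd3 : deriv (deriv (deriv ω)) x
        = 2 * (deriv s x * deriv s x + s x * deriv (deriv s) x) := by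
      have hE : deriv (deriv ω) =ᶠ[nhds x] fun y => 2 * (s y * deriv s y) := by
        filter_upwards [hU.mem_nhds hx] with y hy using hω2 y hy
      have h : HasDerivAt (fun y => 2 * (s y * deriv s y))
          (2 * (deriv s x * deriv s x + s x * deriv (deriv s) x)) x :=
        (hsx.mul hs'x).const_mul 2
      rw [hE.deriv_eq, h.deriv]
    have hden : HasDerivAt (fun y => s y ^ 2) ((2 : ℕ) * s x ^ (2 - 1) * deriv s x) x :=
      hsx.pow 2
    have hy0'' : deriv (deriv fun y => 1 / s y) x
        = (-(deriv (deriv s) x) * s x ^ 2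
            - -deriv s x * ((2 : ℕ) * s x ^ (2 - 1) * deriv s x)) / (s x ^ 2) ^ 2 := by
      have hE : (deriv fun y => 1 / s y) =ᶠ[nhds x] fun y => -deriv s y / s y ^ 2 := by
        filter_upwards [hU.mem_nhds hx] with y hy using (hy0' y hy).deriv
      have h := hs'x.neg.div hden (pow_ne_zero 2 hne)
      rw [hE.deriv_eq]
      exact h.deriv
    have hd1 : deriv ω x = s x ^ 2 := (hsq x hx).symm
    rw [schwarzian, hy0'', hd3, hω2 x hx, hd1]
    exact developing_aux₁ (s x) (deriv s x) (deriv (deriv s) x) hne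
  · -- ODE for y₁ = ω/s
    intro x hx
    have hsx := (hs x hx).differentiableAt.hasDerivAt
    have hs'x := (hs' x hx).differentiableAt.hasDerivAt
    have hωx := (hω x hx).differentiableAt.hasDerivAt
    have hne := hsne x hx
    have hd3 : deriv (deriv (deriv ω)) x
        = 2 * (deriv s x * deriv s x + s x * deriv (deriv s) x) := by
      have hE : deriv (deriv ω) =ᶠ[nhds x] fun y => 2 * (s y * deriv s y) := by
        filter_upwards [hU.mem_nhds hx] with y hy using hω2 y hy
      have h : HasDerivAt (fun y => 2 * (s y * deriv s y))
          (2 * (deriv s x * deriv s x + s x * deriv (deriv s) x)) x :=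
        (hsx.mul hs'x).const_mul 2
      rw [hE.deriv_eq, h.deriv]
    have hden : HasDerivAt (fun y => s y ^ 2) ((2 : ℕ) * s x ^ (2 - 1) * deriv s x) x :=
      hsx.pow 2
    have hnum : HasDerivAt (fun y => s y ^ 2 * s y - ω y * deriv s y)
        ((2 : ℕ) * s x ^ (2 - 1) * deriv s x * s x + s x ^ 2 * deriv s x
          - (deriv ω x * deriv s x + ω x * deriv (deriv s) x)) x :=
      (hden.mul hsx).sub (hωx.mul hs'x)
    have hy1'' : deriv (deriv fun y => ω y / s y) x
        = (((2 : ℕ) * s x ^ (2 - 1) * deriv s x * s x + s x ^ 2 * deriv s x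
              - (deriv ω x * deriv s x + ω x * deriv (deriv s) x)) * s x ^ 2
            - (s x ^ 2 * s x - ω x * deriv s x)
                * ((2 : ℕ) * s x ^ (2 - 1) * deriv s x)) / (s x ^ 2) ^ 2 := by
      have hE : (deriv fun y => ω y / s y) =ᶠ[nhds x]
          fun y => (s y ^ 2 * s y - ω y * deriv s y) / s y ^ 2 := by
        filter_upwards [hU.mem_nhds hx] with y hy using (hy1' y hy).deriv
      have h := hnum.div hden (pow_ne_zero 2 hne)
      rw [hE.deriv_eq]
      exact h.deriv
    have hd1 : deriv ω x = s x ^ 2 := (hsq x hx).symm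
    rw [schwarzian, hy1'', hd3, hω2 x hx, hd1]
    exact developing_aux₂ (s x) (deriv s x) (deriv (deriv s) x) (ω x) hne
  · -- quotient
    intro x hx
    field_simp [hsne x hx]
end

section
/- Let U ⊆ ℂ be a nonempty connected open set, let q : U → ℂ be analytic, and let y₀, y₁ : U → ℂ be analytic solutions of y″ + q·y = 0 on U such that y₀ is nonvanishing on U and the Wronskian y₀·y₁′ − y₁·y₀′ is nonzero at some point of U. Then the quotient ω = y₁/y₀ is analytic on U with ω′ nonvanishing, and its Schwarzian derivative satisfies S(ω) = 2q on U. -/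
/-- The quotient `ω = y₁/y₀` of two independent analytic solutions of `y″ + qy = 0`
(with `y₀` nonvanishing) has nonvanishing derivative and satisfies `S(ω) = 2q`. -/
theorem schwarzian_of_solution_quotient (U : Set ℂ) (hU : IsOpen U) (hUne : U.Nonempty)
    (hUc : IsConnected U) (q y₀ y₁ : ℂ → ℂ)
    (hq : AnalyticOnNhd ℂ q U)
    (hy₀ : AnalyticOnNhd ℂ y₀ U) (hy₁ : AnalyticOnNhd ℂ y₁ U)
    (hode₀ : ∀ x ∈ U, deriv (deriv y₀) x + q x * y₀ x = 0)
    (hode₁ : ∀ x ∈ U, deriv (deriv y₁) x + q x * y₁ x = 0)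
    (hy₀ne : ∀ x ∈ U, y₀ x ≠ 0)
    (hW : ∃ x ∈ U, y₀ x * deriv y₁ x - y₁ x * deriv y₀ x ≠ 0) :
    AnalyticOnNhd ℂ (fun x => y₁ x / y₀ x) U ∧
      (∀ x ∈ U, deriv (fun x => y₁ x / y₀ x) x ≠ 0) ∧
      (∀ x ∈ U, schwarzian (fun x => y₁ x / y₀ x) x = 2 * q x) := by
  obtain ⟨x₀, hx₀, hWx₀⟩ := hW
  set W : ℂ → ℂ := fun x => y₀ x * deriv y₁ x - y₁ x * deriv y₀ x with hWdef
  have hy₀' : AnalyticOnNhd ℂ (deriv y₀) U := hy₀.deriv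
  have hy₁' : AnalyticOnNhd ℂ (deriv y₁) U := hy₁.deriv
  have hWa : AnalyticOnNhd ℂ W U := (hy₀.mul hy₁').sub (hy₁.mul hy₀')
  have hWd : ∀ x ∈ U, HasDerivAt W 0 x := by
    intro x hx
    have h0 := (hy₀ x hx).differentiableAt.hasDerivAt
    have h1 := (hy₁ x hx).differentiableAt.hasDerivAt
    have h0' := (hy₀' x hx).differentiableAt.hasDerivAt
    have h1' := (hy₁' x hx).differentiableAt.hasDerivAt
    have h := (h0.mul h1').sub (h1.mul h0')
    refine h.congr_deriv (Eq.symm ?_)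
    have e0 := hode₀ x hx
    have e1 := hode₁ x hx
    linear_combination y₁ x * e0 - y₀ x * e1
  set c : ℂ := W x₀ with hc
  have hWconst : ∀ x ∈ U, W x = c := by
    have heq : Set.EqOn W (fun _ => c) U := by
      apply hWa.eqOn_of_preconnected_of_eventuallyEq analyticOnNhd_const hUc.isPreconnected hx₀
      obtain ⟨ε, hε, hball⟩ := Metric.isOpen_iff.1 hU x₀ hx₀
      have hb : ∀ y ∈ Metric.ball x₀ ε, W y = W x₀ := by
        intro y hy
        refine (convex_ball x₀ ε).is_const_of_fderivWithin_eq_zero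
          (fun z hz => ((hWa z (hball hz)).differentiableAt).differentiableWithinAt)
          (fun z hz => ?_) hy (Metric.mem_ball_self hε)
        rw [fderivWithin_of_isOpen Metric.isOpen_ball hz,
          (hWd z (hball hz)).hasFDerivAt.fderiv]
        ext v; simp
      filter_upwards [Metric.isOpen_ball.mem_nhds (Metric.mem_ball_self hε)] with y hy
        using hb y hy
    exact fun x hx => heq hx
  have hcne : c ≠ 0 := hWx₀
  clear_value c
  set ω : ℂ → ℂ := fun x => y₁ x / y₀ x with hω
  have hωa : AnalyticOnNhd ℂ ω U := hy₁.div hy₀ hy₀ne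
  -- first derivative
  have hd1 : ∀ x ∈ U, deriv ω x = c / y₀ x ^ 2 := by
    intro x hx
    have h0 := (hy₀ x hx).differentiableAt.hasDerivAt
    have h1 := (hy₁ x hx).differentiableAt.hasDerivAt
    have h := (show HasDerivAt ω _ x from h1.div h0 (hy₀ne x hx)).deriv
    rw [h, ← hWconst x hx]
    simp only [hWdef]
    ring
  -- second derivative
  have hg2 : ∀ x ∈ U, HasDerivAt (fun x => c / y₀ x ^ 2)
      (-(2 * c * deriv y₀ x) / y₀ x ^ 3) x := by
    intro x hx
    have h0 := (hy₀ x hx).differentiableAt.hasDerivAt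
    have h : HasDerivAt (fun x => c / y₀ x ^ 2) _ x := (hasDerivAt_const x c).div
      (h0.pow 2 : HasDerivAt (fun x => y₀ x ^ 2) _ x) (pow_ne_zero 2 (hy₀ne x hx))
    have hne := hy₀ne x hx
    convert h using 1
    rw [div_eq_div_iff (pow_ne_zero 3 hne) (pow_ne_zero 2 (pow_ne_zero 2 hne))]
    push_cast
    ring
  have hd2 : ∀ x ∈ U, deriv (deriv ω) x = -(2 * c * deriv y₀ x) / y₀ x ^ 3 := by
    intro x hx
    have hev : deriv ω =ᶠ[nhds x] fun x => c / y₀ x ^ 2 :=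
      Filter.eventuallyEq_iff_exists_mem.2 ⟨U, hU.mem_nhds hx, fun y hy => hd1 y hy⟩
    rw [hev.deriv_eq, (hg2 x hx).deriv]
  -- third derivative
  have hd3 : ∀ x ∈ U, deriv (deriv (deriv ω)) x =
      (-(2 * c * deriv (deriv y₀) x) * y₀ x ^ 3 -
        -(2 * c * deriv y₀ x) * (3 * y₀ x ^ 2 * deriv y₀ x)) / (y₀ x ^ 3) ^ 2 := by
    intro x hx
    have hev : deriv (deriv ω) =ᶠ[nhds x] fun x => -(2 * c * deriv y₀ x) / y₀ x ^ 3 :=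
      Filter.eventuallyEq_iff_exists_mem.2 ⟨U, hU.mem_nhds hx, fun y hy => hd2 y hy⟩
    rw [hev.deriv_eq]
    have h0 := (hy₀ x hx).differentiableAt.hasDerivAt
    have h0' := (hy₀' x hx).differentiableAt.hasDerivAt
    have hnum : HasDerivAt (fun x => -(2 * c * deriv y₀ x))
        (-(2 * c * deriv (deriv y₀) x)) x := (h0'.const_mul (2 * c)).neg
    have h : HasDerivAt (fun x => -(2 * c * deriv y₀ x) / y₀ x ^ 3) _ x := hnum.div
      (h0.pow 3 : HasDerivAt (fun x => y₀ x ^ 3) _ x) (pow_ne_zero 3 (hy₀ne x hx))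
    rw [h.deriv]
    norm_num
  refine ⟨hωa, fun x hx => ?_, fun x hx => ?_⟩
  · rw [hd1 x hx]
    exact div_ne_zero hcne (pow_ne_zero 2 (hy₀ne x hx))
  · have e0 : deriv (deriv y₀) x = -(q x * y₀ x) := by
      linear_combination hode₀ x hx
    have hne := hy₀ne x hx
    rw [schwarzian, hd1 x hx, hd2 x hx, hd3 x hx, e0]
    field_simp [hcne, hne]
    ring
end
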